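/- Each propagation term H_t (t = 0, …, K−1) is a positive semidefinite self-adjoint operator on ℂ^d ⊗ ℂ^{K+1}: for every vector v, the inner product ⟨v, H_t v⟩ is a nonnegative real number. Consequently H_prop = Σ_{t=0}^{K−1} H_t is positive semidefinite, so 0 is its least eigenvalue and the history state Σ_{t=0}^{K} γ_t (for φ ≠ 0) is a ground state of H_prop. -/

import Mathlib

open Matrix Complex
open scoped Kronecker Matrix ComplexOrder

/-- The product `U_t ⋯ U_2 U_1` (with `U i` for `i : Fin K` standing for `U_{i+1}`). -/
noncomputable def prodU (d K : ℕ) (U : Fin K → Matrix (Fin d) (Fin d) ℂ) :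
    ℕ → Matrix (Fin d) (Fin d) ℂ
  | 0 => 1
  | t + 1 => (if h : t < K then U ⟨t, h⟩ else 1) * prodU d K U t

/-- The state `γ_t := (U_t ⋯ U₁ φ) ⊗ e_t` on `ℂ^d ⊗ ℂ^{K+1}`. -/
noncomputable def gammaVec (d K : ℕ) (U : Fin K → Matrix (Fin d) (Fin d) ℂ)
    (φ : Fin d → ℂ) (t : Fin (K + 1)) : Fin d × Fin (K + 1) → ℂ :=
  fun p => (prodU d K U t.val *ᵥ φ) p.1 * (if p.2 = t then 1 else 0)

/-- The clock matrix `e_a e_b†` on `ℂ^{K+1}`. -/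
noncomputable def clockE (K : ℕ) (a b : Fin (K + 1)) :
    Matrix (Fin (K + 1)) (Fin (K + 1)) ℂ :=
  Matrix.single a b 1

/-- The propagation term
`H_t := I ⊗ (e_t e_t† + e_{t+1} e_{t+1}†) − U_{t+1} ⊗ (e_{t+1} e_t†) − U_{t+1}† ⊗ (e_t e_{t+1}†)`. -/
noncomputable def Hterm (d K : ℕ) (U : Fin K → Matrix (Fin d) (Fin d) ℂ) (t : Fin K) :
    Matrix (Fin d × Fin (K + 1)) (Fin d × Fin (K + 1)) ℂ :=
  (1 : Matrix (Fin d) (Fin d) ℂ) ⊗ₖ (clockE K t.castSucc t.castSucc + clockE K t.succ t.succ)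
    - (U t) ⊗ₖ (clockE K t.succ t.castSucc)
    - (U t)ᴴ ⊗ₖ (clockE K t.castSucc t.succ)

/-- The propagation Hamiltonian `H_prop := Σ_{t=0}^{K−1} H_t`. -/
noncomputable def Hprop (d K : ℕ) (U : Fin K → Matrix (Fin d) (Fin d) ℂ) :
    Matrix (Fin d × Fin (K + 1)) (Fin d × Fin (K + 1)) ℂ :=
  ∑ t : Fin K, Hterm d K U t

/-! ### Auxiliary lemmas -/

lemma kron_conjTranspose {l m n p : Type*} (A : Matrix l m ℂ) (B : Matrix n p ℂ) :
    (A ⊗ₖ B)ᴴ = Aᴴ ⊗ₖ Bᴴ := by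
  ext ⟨i, a⟩ ⟨j, b⟩
  simp [conjTranspose_apply, kroneckerMap_apply]

lemma clockE_conjTranspose (K : ℕ) (a b : Fin (K + 1)) :
    (clockE K a b)ᴴ = clockE K b a := by
  ext i j
  simp [clockE, conjTranspose_apply, Matrix.single, and_comm]

/-- The key factorization `H_t = A† A`. -/
lemma Hterm_eq_conjTranspose_mul_self (d K : ℕ) (U : Fin K → Matrix (Fin d) (Fin d) ℂ)
    (t : Fin K) (h1 : (U t) * (U t)ᴴ = 1) :
    Hterm d K U t =
      ((1 : Matrix (Fin d) (Fin d) ℂ) ⊗ₖ clockE K t.castSucc t.castSucc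
        - (U t)ᴴ ⊗ₖ clockE K t.castSucc t.succ)ᴴ *
      ((1 : Matrix (Fin d) (Fin d) ℂ) ⊗ₖ clockE K t.castSucc t.castSucc
        - (U t)ᴴ ⊗ₖ clockE K t.castSucc t.succ) := by
  have hne : t.castSucc ≠ t.succ := (Fin.castSucc_lt_succ (i := t)).ne
  have hne' : t.succ ≠ t.castSucc := hne.symm
  rw [conjTranspose_sub, kron_conjTranspose, kron_conjTranspose, clockE_conjTranspose,
    clockE_conjTranspose, conjTranspose_one, conjTranspose_conjTranspose,
    sub_mul, mul_sub, mul_sub, ← mul_kronecker_mul, ← mul_kronecker_mul,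
    ← mul_kronecker_mul, ← mul_kronecker_mul]
  simp only [clockE, Matrix.single_mul_single_same, Matrix.single_mul_single_of_ne, hne',
    ne_eq, not_false_iff, one_mul, mul_one, h1]
  rw [Hterm, kronecker_add]
  simp only [clockE]
  abel

lemma kron_clock_mulVec (d K : ℕ) (A : Matrix (Fin d) (Fin d) ℂ) (a b : Fin (K + 1))
    (x : Fin d × Fin (K + 1) → ℂ) (i : Fin d) (c : Fin (K + 1)) :
    ((A ⊗ₖ clockE K a b) *ᵥ x) (i, c) =
      if a = c then (A *ᵥ fun j => x (j, b)) i else 0 := by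
  simp only [mulVec, dotProduct, Fintype.sum_prod_type, kroneckerMap_apply, clockE,
    Matrix.single, Matrix.of_apply]
  by_cases hac : a = c
  · subst hac
    simp only [true_and, if_pos rfl]
    rw [Finset.sum_comm]
    rw [Finset.sum_eq_single b]
    · simp
    · intro b' _ hb'
      apply Finset.sum_eq_zero
      intro j _
      simp [Ne.symm hb']
    · simp
  · simp only [hac, false_and, if_neg]
    simp [hac]

lemma history_apply (d K : ℕ) (U : Fin K → Matrix (Fin d) (Fin d) ℂ) (φ : Fin d → ℂ)
    (j : Fin d) (b : Fin (K + 1)) :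
    (∑ t : Fin (K + 1), gammaVec d K U φ t) (j, b) = (prodU d K U b.val *ᵥ φ) j := by
  simp only [Finset.sum_apply, gammaVec, mul_ite, mul_one, mul_zero]
  rw [Finset.sum_ite_eq (Finset.univ : Finset (Fin (K + 1))) b]
  simp

lemma sum_mulVec' {n m : Type*} [Fintype n] [Fintype m] (f : m → Matrix n n ℂ)
    (v : n → ℂ) : (∑ i : m, f i) *ᵥ v = ∑ i : m, f i *ᵥ v := by
  ext j
  simp only [mulVec, dotProduct, Matrix.sum_apply, Finset.sum_apply, Finset.sum_mul]
  rw [Finset.sum_comm]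

lemma Hterm_mulVec_history (d K : ℕ) (U : Fin K → Matrix (Fin d) (Fin d) ℂ)
    (hU : ∀ i, U i ∈ Matrix.unitaryGroup (Fin d) ℂ) (φ : Fin d → ℂ) (t : Fin K) :
    Hterm d K U t *ᵥ (∑ s : Fin (K + 1), gammaVec d K U φ s) = 0 := by
  funext p
  obtain ⟨i, a⟩ := p
  have hwdef : ∀ (j : Fin d) (b : Fin (K + 1)),
      (∑ s : Fin (K + 1), gammaVec d K U φ s) (j, b) = (prodU d K U b.val *ᵥ φ) j :=
    fun j b => history_apply d K U φ j b
  set w : Fin d × Fin (K + 1) → ℂ := fun p => (prodU d K U p.2.val *ᵥ φ) p.1 with hwd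
  have hw : (∑ s : Fin (K + 1), gammaVec d K U φ s) = w := funext fun p => hwdef p.1 p.2
  rw [hw]
  have hstep : (fun j => w (j, t.succ)) = (U t) *ᵥ fun j => w (j, t.castSucc) := by
    funext j
    simp only [hwd]
    have : (t.succ : Fin (K + 1)).val = t.val + 1 := rfl
    rw [this, show (t.castSucc : Fin (K + 1)).val = t.val from rfl]
    rw [show prodU d K U (t.val + 1) = (if h : t.val < K then U ⟨t.val, h⟩ else 1) *
      prodU d K U t.val from rfl, dif_pos t.isLt]
    simp [Matrix.mulVec_mulVec]
  have hUU : (U t)ᴴ *ᵥ ((U t) *ᵥ fun j => w (j, t.castSucc)) = fun j => w (j, t.castSucc) := by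
    rw [Matrix.mulVec_mulVec, ← Matrix.star_eq_conjTranspose, (hU t).1, Matrix.one_mulVec]
  rw [Hterm, Matrix.sub_mulVec, Matrix.sub_mulVec, kronecker_add, Matrix.add_mulVec]
  simp only [Pi.sub_apply, Pi.add_apply, Pi.zero_apply]
  rw [kron_clock_mulVec, kron_clock_mulVec, kron_clock_mulVec, kron_clock_mulVec]
  rw [hstep, hUU]
  by_cases h1 : t.castSucc = a
  · have h2 : t.succ ≠ a := fun h => (Fin.castSucc_lt_succ (i := t)).ne (h1.trans h.symm)
    simp [h1, h2, Matrix.one_mulVec]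
  · by_cases h2 : t.succ = a
    · simp [h1, h2, Matrix.one_mulVec]
    · simp [h1, h2]

/-- Each propagation term `H_t` is a positive semidefinite self-adjoint operator
(`⟨v, H_t v⟩` is a nonnegative real for every `v`); consequently `H_prop` is positive
semidefinite, `0` is its least eigenvalue, and the history state `Σ_t γ_t` (for `φ ≠ 0`)
is a ground state of `H_prop`. -/
theorem Hterm_posSemidef (d K : ℕ) (hd : 1 ≤ d) (hK : 1 ≤ K)
    (U : Fin K → Matrix (Fin d) (Fin d) ℂ)
    (hU : ∀ i, U i ∈ Matrix.unitaryGroup (Fin d) ℂ)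
    (φ : Fin d → ℂ) :
    (∀ t : Fin K, (Hterm d K U t).PosSemidef) ∧
      (Hprop d K U).PosSemidef ∧
      (∀ (μ : ℂ) (v : Fin d × Fin (K + 1) → ℂ), v ≠ 0 → Hprop d K U *ᵥ v = μ • v →
        0 ≤ μ.re ∧ μ.im = 0) ∧
      Hprop d K U *ᵥ (∑ t : Fin (K + 1), gammaVec d K U φ t) = 0 ∧
      (φ ≠ 0 → (∑ t : Fin (K + 1), gammaVec d K U φ t) ≠ 0) := by
  have hterm : ∀ t : Fin K, (Hterm d K U t).PosSemidef := by
    intro t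
    have h1 : (U t) * (U t)ᴴ = 1 := by
      rw [← Matrix.star_eq_conjTranspose]; exact (hU t).2
    rw [Hterm_eq_conjTranspose_mul_self d K U t h1]
    exact Matrix.posSemidef_conjTranspose_mul_self _
  have hprop : (Hprop d K U).PosSemidef := by
    rw [Hprop]
    refine Finset.sum_induction _ _ (fun a b ha hb => ha.add hb) ?_ (fun t _ => hterm t)
    exact Matrix.PosSemidef.zero
  refine ⟨hterm, hprop, ?_, ?_, ?_⟩
  · intro μ v hv hμ
    have hle := hprop.dotProduct_mulVec_nonneg v
    rw [hμ] at hle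
    have hdp : dotProduct (star v) (μ • v) = μ * dotProduct (star v) v := by
      simp [dotProduct, Finset.mul_sum, mul_comm, mul_left_comm, mul_assoc]
    rw [hdp] at hle
    have hpos : 0 < dotProduct (star v) v := dotProduct_star_self_pos_iff.mpr hv
    rw [Complex.lt_def] at hpos
    rw [Complex.le_def] at hle
    obtain ⟨hre, him⟩ := hle
    obtain ⟨hcre, hcim⟩ := hpos
    simp only [Complex.zero_re, Complex.zero_im, Complex.mul_re, Complex.mul_im]
      at hre him hcre hcim
    have hcim0 : (dotProduct (star v) v).im = 0 := hcim.symm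
    have himz : μ.im = 0 := by
      have h' : μ.im * (dotProduct (star v) v).re = 0 := by
        rw [hcim0] at him; linarith
      rcases mul_eq_zero.mp h' with h | h
      · exact h
      · exact absurd h (ne_of_gt hcre)
    refine ⟨?_, himz⟩
    rw [hcim0, himz] at hre
    simp only [mul_zero, zero_mul, sub_zero] at hre
    by_contra h
    push_neg at h
    nlinarith
  · rw [Hprop, sum_mulVec']
    apply Finset.sum_eq_zero
    intro t _
    exact Hterm_mulVec_history d K U hU φ t
  · intro hφ hcontra
    apply hφ
    funext j
    have := congrFun hcontra (j, (0 : Fin (K + 1)))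
    rw [history_apply] at this
    have h0 : prodU d K U (0 : Fin (K + 1)).val = 1 := rfl
    rw [h0, Matrix.one_mulVec] at this
    exact this
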